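/- The Ollivier–Ricci curvature ric(x,x') = lim_{t→0} κ^t(x,x')/t exists and equals κ^{t_0}(x,x')/t_0 for any fixed t_0 ∈ (0, 1/2]. -/

import Mathlib

open Classical Filter
noncomputable section

/-- A coupling (transference plan) between two measures on `V`, given as
nonnegative density functions. -/
def IsCoupling {V : Type*} (μ ν : V → ℝ) (ξ : V → V → ℝ) : Prop :=
  (∀ y y', 0 ≤ ξ y y') ∧ (∀ y, ∑' y', ξ y y' = μ y) ∧ (∀ y', ∑' y, ξ y y' = ν y')

/-- The 1-Wasserstein distance between `μ` and `ν` for the cost function `ρ`. -/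
def W1 {V : Type*} (ρ : V → V → ℝ) (μ ν : V → ℝ) : ℝ :=
  sInf {c | ∃ ξ, IsCoupling μ ν ξ ∧
    HasSum (fun p : V × V => ξ p.1 p.2 * ρ p.1 p.2) c}

/-- The shortest-path distance of a graph, as a real number. -/
def graphDist {V : Type*} (G : SimpleGraph V) (x y : V) : ℝ := G.dist x y

/-- The degree of a vertex. -/
def deg {V : Type*} (G : SimpleGraph V) (x : V) : ℕ := Nat.card {y | G.Adj x y}

/-- The Dirac measure at `x`. -/
def dirac {V : Type*} (x : V) : V → ℝ := fun y => if y = x then 1 else 0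

/-- The lazy random walk `μ_x^t = (1-t)·δ_x + t·(uniform measure on the neighbors of x)`. -/
def lazyWalk {V : Type*} (G : SimpleGraph V) (t : ℝ) (x y : V) : ℝ :=
  if y = x then 1 - t else if G.Adj x y then t / (deg G x) else 0

/-- The coarse Ricci curvature `κ^t(x,x') = 1 - W₁(μ_x^t, μ_{x'}^t)/d(x,x')`. -/
def kappa {V : Type*} (G : SimpleGraph V) (t : ℝ) (x x' : V) : ℝ :=
  1 - W1 (graphDist G) (lazyWalk G t x) (lazyWalk G t x') / graphDist G x x'

section Aux

variable {V : Type*} {G : SimpleGraph V}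

lemma lazyWalk_self (G : SimpleGraph V) (t : ℝ) (x : V) : lazyWalk G t x x = 1 - t := if_pos rfl

lemma graphDist_nonneg (G : SimpleGraph V) (a b : V) : 0 ≤ graphDist G a b := Nat.cast_nonneg _

lemma one_le_graphDist (hconn : G.Connected) {a b : V} (h : a ≠ b) : 1 ≤ graphDist G a b := by
  unfold graphDist
  exact_mod_cast Nat.one_le_iff_ne_zero.mpr (hconn.pos_dist_of_ne h).ne'

lemma deg_pos (hconn : G.Connected) (hfin : ∀ v, (G.neighborSet v).Finite)
    {x x' : V} (hne : x ≠ x') : 0 < deg G x := by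
  obtain ⟨w⟩ := hconn x x'
  have hx : ∃ y, G.Adj x y := by
    cases w with
    | nil => exact absurd rfl hne
    | cons h p => exact ⟨_, h⟩
  obtain ⟨y, hy⟩ := hx
  have : Finite {y | G.Adj x y} := (hfin x).to_subtype
  have : Nonempty {y | G.Adj x y} := ⟨⟨y, hy⟩⟩
  exact Nat.card_pos

lemma lazyWalk_eq_zero {t : ℝ} {x y : V} (h1 : y ≠ x) (h2 : ¬ G.Adj x y) :
    lazyWalk G t x y = 0 := by
  unfold lazyWalk
  rw [if_neg h1, if_neg h2]

lemma lazyWalk_nonneg {t : ℝ} (ht0 : 0 ≤ t) (ht1 : t ≤ 1) (x y : V) :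
    0 ≤ lazyWalk G t x y := by
  unfold lazyWalk
  split_ifs
  · linarith
  · positivity
  · exact le_refl 0

lemma lazyWalk_hasSum (hconn : G.Connected) (hfin : ∀ v, (G.neighborSet v).Finite)
    {x x' : V} (hne : x ≠ x') (t : ℝ) : HasSum (lazyWalk G t x) 1 := by
  classical
  have hd := deg_pos hconn hfin hne
  set F : Finset V := insert x (hfin x).toFinset with hF
  have hz : ∀ y ∉ F, lazyWalk G t x y = 0 := by
    intro y hy
    simp only [hF, Finset.mem_insert, Set.Finite.mem_toFinset, SimpleGraph.mem_neighborSet,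
      not_or] at hy
    exact lazyWalk_eq_zero hy.1 hy.2
  have h : HasSum _ _ := hasSum_sum_of_ne_finset_zero hz
  have hxn : x ∉ (hfin x).toFinset := by
    simp [Set.Finite.mem_toFinset]
  have hcard : ((hfin x).toFinset.card : ℝ) = (deg G x : ℝ) := by
    norm_cast
    rw [deg, Nat.card_coe_set_eq]
    exact (Set.ncard_eq_toFinset_card _ (hfin x)).symm
  have hsum : ∑ y ∈ F, lazyWalk G t x y = 1 := by
    rw [hF, Finset.sum_insert hxn, lazyWalk_self]
    have hval : ∀ y ∈ (hfin x).toFinset, lazyWalk G t x y = t / (deg G x) := by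
      intro y hy
      rw [Set.Finite.mem_toFinset, SimpleGraph.mem_neighborSet] at hy
      unfold lazyWalk
      rw [if_neg (by rintro rfl; exact G.irrefl hy), if_pos hy]
    rw [Finset.sum_congr rfl hval, Finset.sum_const, nsmul_eq_mul, hcard]
    have hdne : (deg G x : ℝ) ≠ 0 := Nat.cast_ne_zero.mpr hd.ne'
    field_simp
    ring
  rwa [hsum] at h

end Aux

section Aux2

variable {V : Type*} {G : SimpleGraph V}

/-- The set of coupling costs between the lazy walks at `x` and `x'` at time `r`. -/
def CSet (G : SimpleGraph V) (x x' : V) (r : ℝ) : Set ℝ :=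
  {c | ∃ ξ, IsCoupling (lazyWalk G r x) (lazyWalk G r x') ξ ∧
    HasSum (fun p : V × V => ξ p.1 p.2 * graphDist G p.1 p.2) c}

lemma W1_eq_sInf_CSet (G : SimpleGraph V) (x x' : V) (r : ℝ) :
    W1 (graphDist G) (lazyWalk G r x) (lazyWalk G r x') = sInf (CSet G x x' r) := rfl

lemma CSet_nonneg {x x' : V} {r c : ℝ} (hc : c ∈ CSet G x x' r) : 0 ≤ c := by
  obtain ⟨ξ, hξ, hsum⟩ := hc
  exact hasSum_le (fun p => mul_nonneg (hξ.1 _ _) (graphDist_nonneg G _ _)) hasSum_zero hsum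

lemma CSet_bddBelow (G : SimpleGraph V) (x x' : V) (r : ℝ) : BddBelow (CSet G x x' r) :=
  ⟨0, fun _ hc => CSet_nonneg hc⟩

lemma CSet_nonempty (hconn : G.Connected) (hfin : ∀ v, (G.neighborSet v).Finite)
    {x x' : V} (hne : x ≠ x') {r : ℝ} (hr0 : 0 ≤ r) (hr1 : r ≤ 1) :
    (CSet G x x' r).Nonempty := by
  classical
  have hμ := lazyWalk_hasSum hconn hfin hne r
  have hν := lazyWalk_hasSum hconn hfin hne.symm r
  set F : Finset V := insert x (hfin x).toFinset with hF
  set F' : Finset V := insert x' (hfin x').toFinset with hF'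
  set ξ : V → V → ℝ := fun y y' => lazyWalk G r x y * lazyWalk G r x' y' with hξdef
  have hz : ∀ p : V × V, p ∉ F ×ˢ F' → ξ p.1 p.2 * graphDist G p.1 p.2 = 0 := by
    intro p hp
    rw [Finset.mem_product, not_and_or] at hp
    rcases hp with hp | hp
    · have : lazyWalk G r x p.1 = 0 := by
        simp only [hF, Finset.mem_insert, Set.Finite.mem_toFinset,
          SimpleGraph.mem_neighborSet, not_or] at hp
        exact lazyWalk_eq_zero hp.1 hp.2
      simp [hξdef, this]
    · have : lazyWalk G r x' p.2 = 0 := by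
        simp only [hF', Finset.mem_insert, Set.Finite.mem_toFinset,
          SimpleGraph.mem_neighborSet, not_or] at hp
        exact lazyWalk_eq_zero hp.1 hp.2
      simp [hξdef, this]
  refine ⟨_, ⟨ξ, ⟨?_, ?_, ?_⟩, hasSum_sum_of_ne_finset_zero hz⟩⟩
  · intro y y'
    exact mul_nonneg (lazyWalk_nonneg hr0 hr1 x y) (lazyWalk_nonneg hr0 hr1 x' y')
  · intro y
    rw [hξdef]
    simp only
    rw [tsum_mul_left, hν.tsum_eq, mul_one]
  · intro y'
    rw [hξdef]
    simp only
    rw [tsum_mul_right, hμ.tsum_eq, one_mul]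

lemma row_summable (hconn : G.Connected) {ξ : V → V → ℝ} (hξ0 : ∀ y y', 0 ≤ ξ y y')
    (hcost : Summable (fun p : V × V => ξ p.1 p.2 * graphDist G p.1 p.2)) (y : V) :
    Summable (fun y' => ξ y y') := by
  classical
  have hinj : Function.Injective (fun y' => ((y, y') : V × V)) := fun a b h => congrArg Prod.snd h
  have h1 : Summable (fun y' => ξ y y' * graphDist G y y') := hcost.comp_injective hinj
  refine Summable.of_nonneg_of_le (fun y' => hξ0 y y') (fun y' => ?_) (h1.update y (ξ y y))
  rw [Function.update_apply]
  split_ifs with h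
  · subst h; exact le_rfl
  · exact le_mul_of_one_le_right (hξ0 y y') (one_le_graphDist hconn (fun e => h e.symm))

lemma col_summable (hconn : G.Connected) {ξ : V → V → ℝ} (hξ0 : ∀ y y', 0 ≤ ξ y y')
    (hcost : Summable (fun p : V × V => ξ p.1 p.2 * graphDist G p.1 p.2)) (y' : V) :
    Summable (fun y => ξ y y') := by
  classical
  have hinj : Function.Injective (fun y => ((y, y') : V × V)) := fun a b h => congrArg Prod.fst h
  have h1 : Summable (fun y => ξ y y' * graphDist G y y') := hcost.comp_injective hinj
  refine Summable.of_nonneg_of_le (fun y => hξ0 y y') (fun y => ?_) (h1.update y' (ξ y' y'))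
  rw [Function.update_apply]
  split_ifs with h
  · subst h; exact le_rfl
  · exact le_mul_of_one_le_right (hξ0 y y') (one_le_graphDist hconn h)

/-- Any coupling of the two lazy walks at time `s` puts mass at least `1 - 2s` on `(x, x')`. -/
lemma coupling_xx'_ge (hconn : G.Connected) (hfin : ∀ v, (G.neighborSet v).Finite)
    {x x' : V} (hne : x ≠ x') {s : ℝ} {ξ : V → V → ℝ}
    (hξ : IsCoupling (lazyWalk G s x) (lazyWalk G s x') ξ)
    (hcost : Summable (fun p : V × V => ξ p.1 p.2 * graphDist G p.1 p.2)) :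
    1 - 2 * s ≤ ξ x x' := by
  classical
  have hrow : Summable (fun y' => ξ x y') := row_summable hconn hξ.1 hcost x
  have hν := lazyWalk_hasSum hconn hfin hne.symm s
  have hentry : ∀ y', ξ x y' ≤ lazyWalk G s x' y' := by
    intro y'
    rw [← hξ.2.2 y']
    exact Summable.le_tsum (col_summable hconn hξ.1 hcost y') x (fun j _ => hξ.1 j y')
  have h1 : ∑' y', ξ x y' = 1 - s := by rw [hξ.2.1 x, lazyWalk_self]
  have h2 : ∑' y', ξ x y' = ξ x x' + ∑' y', ite (y' = x') 0 (ξ x y') :=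
    Summable.tsum_eq_add_tsum_ite hrow x'
  have h3 : ∑' y', lazyWalk G s x' y'
      = lazyWalk G s x' x' + ∑' y', ite (y' = x') 0 (lazyWalk G s x' y') :=
    Summable.tsum_eq_add_tsum_ite hν.summable x'
  have hs1 : Summable (fun y' => ite (y' = x') 0 (ξ x y')) := by
    refine Summable.of_nonneg_of_le (fun y' => ?_) (fun y' => ?_) hrow
    · split_ifs
      · exact le_rfl
      · exact hξ.1 x y'
    · split_ifs
      · exact hξ.1 x y'
      · exact le_rfl
  have hs2 : Summable (fun y' => ite (y' = x') 0 (lazyWalk G s x' y')) := by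
    refine Summable.of_nonneg_of_le (fun y' => ?_) (fun y' => ?_) hν.summable
    · split_ifs
      · exact le_rfl
      · exact le_trans (hξ.1 x y') (hentry y')
    · split_ifs
      · exact le_trans (hξ.1 x y') (hentry y')
      · exact le_rfl
  have h4 : ∑' y', ite (y' = x') 0 (ξ x y') ≤ ∑' y', ite (y' = x') 0 (lazyWalk G s x' y') := by
    refine Summable.tsum_le_tsum (fun y' => ?_) hs1 hs2
    split_ifs
    · exact le_rfl
    · exact hentry y'
  have h5 : ∑' y', lazyWalk G s x' y' = 1 := hν.tsum_eq
  have h6 : lazyWalk G s x' x' = 1 - s := lazyWalk_self G s x'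
  linarith

end Aux2

section Aux3

variable {V : Type*} {G : SimpleGraph V}

lemma lazyWalk_combo (s u : ℝ) (hu : u ≠ 0) (x y : V) :
    (s / u) * lazyWalk G u x y + (1 - s / u) * dirac x y = lazyWalk G s x y := by
  unfold lazyWalk dirac
  split_ifs with h1 h2
  · field_simp
    ring
  · rw [mul_zero, add_zero, div_mul_div_comm, mul_comm s u, mul_div_mul_left _ _ hu]
  · simp

lemma dirac_prod_eq (x x' : V) (p : V × V) :
    dirac x p.1 * dirac x' p.2 = if p = (x, x') then (1 : ℝ) else 0 := by
  unfold dirac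
  by_cases h1 : p.1 = x <;> by_cases h2 : p.2 = x' <;>
    simp [h1, h2, Prod.ext_iff]

/-- Transfer a coupling at time `s` to a coupling at time `u`, affinely in the cost. -/
lemma transfer_mem (hconn : G.Connected) {x x' : V}
    {s u c : ℝ} (hs : s ≠ 0) (hus : 0 ≤ u / s) (hc : c ∈ CSet G x x' s)
    (hgood : ∀ ξ : V → V → ℝ, IsCoupling (lazyWalk G s x) (lazyWalk G s x') ξ →
      Summable (fun p : V × V => ξ p.1 p.2 * graphDist G p.1 p.2) →
      u / s - 1 ≤ (u / s) * ξ x x') :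
    (u / s) * c - (u / s - 1) * graphDist G x x' ∈ CSet G x x' u := by
  classical
  obtain ⟨ξ, hξ, hsum⟩ := hc
  set a : ℝ := u / s with ha
  set ξ' : V → V → ℝ := fun y y' => a * ξ y y' - (a - 1) * (dirac x y * dirac x' y') with hξ'
  have hrows : ∀ y, Summable (fun y' => ξ y y') := row_summable hconn hξ.1 hsum.summable
  have hcols : ∀ y', Summable (fun y => ξ y y') := col_summable hconn hξ.1 hsum.summable
  refine ⟨ξ', ⟨?_, ?_, ?_⟩, ?_⟩
  · -- nonnegativity
    intro y y'
    by_cases hxy : y = x ∧ y' = x'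
    · obtain ⟨rfl, rfl⟩ := hxy
      have := hgood ξ hξ hsum.summable
      simp only [hξ', dirac, eq_self_iff_true, if_true, mul_one]
      linarith
    · have hz : dirac x y * dirac x' y' = 0 := by
        rcases not_and_or.mp hxy with h | h
        · simp [dirac, h]
        · simp [dirac, h]
      simp only [hξ', hz, mul_zero, sub_zero]
      exact mul_nonneg hus (hξ.1 y y')
  · -- first marginal
    intro y
    have hξrow : HasSum (fun y' => ξ y y') (lazyWalk G s x y) := (hξ.2.1 y) ▸ (hrows y).hasSum
    have h2 : HasSum (fun y' => ((a - 1) * dirac x y) * dirac x' y')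
        (((a - 1) * dirac x y) * 1) := (hasSum_ite_eq x' (1 : ℝ)).mul_left _
    have h3 := (hξrow.mul_left a).sub h2
    have hfg : (fun y' => a * ξ y y' - ((a - 1) * dirac x y) * dirac x' y')
        = fun y' => ξ' y y' := by
      funext y'
      simp only [hξ']
      ring
    rw [hfg] at h3
    rw [h3.tsum_eq, ← lazyWalk_combo u s hs x y]
    ring
  · -- second marginal
    intro y'
    have hξcol : HasSum (fun y => ξ y y') (lazyWalk G s x' y') := (hξ.2.2 y') ▸ (hcols y').hasSum
    have h2 : HasSum (fun y => ((a - 1) * dirac x' y') * dirac x y)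
        (((a - 1) * dirac x' y') * 1) := (hasSum_ite_eq x (1 : ℝ)).mul_left _
    have h3 := (hξcol.mul_left a).sub h2
    have hfg : (fun y => a * ξ y y' - ((a - 1) * dirac x' y') * dirac x y)
        = fun y => ξ' y y' := by
      funext y
      simp only [hξ']
      ring
    rw [hfg] at h3
    rw [h3.tsum_eq, ← lazyWalk_combo u s hs x' y']
    ring
  · -- the cost
    have h2 : HasSum (fun p : V × V => (if p = (x, x') then (1 : ℝ) else 0) * graphDist G p.1 p.2)
        (graphDist G x x') := by
      have heq : (fun p : V × V => (if p = (x, x') then (1 : ℝ) else 0) * graphDist G p.1 p.2)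
          = fun p : V × V => if p = (x, x') then graphDist G x x' else 0 := by
        funext p
        split_ifs with h
        · subst h; simp
        · simp
      rw [heq]
      exact hasSum_ite_eq _ _
    have h3 := (hsum.mul_left a).sub (h2.mul_left (a - 1))
    have hfg : (fun p : V × V => a * (ξ p.1 p.2 * graphDist G p.1 p.2)
          - (a - 1) * ((if p = (x, x') then (1 : ℝ) else 0) * graphDist G p.1 p.2))
        = fun p : V × V => ξ' p.1 p.2 * graphDist G p.1 p.2 := by
      funext p
      simp only [hξ', ← dirac_prod_eq x x' p]
      ring
    rwa [hfg] at h3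

end Aux3

section Aux4

variable {V : Type*} {G : SimpleGraph V}

lemma sInf_CSet_eq (hconn : G.Connected) (hfin : ∀ v, (G.neighborSet v).Finite)
    {x x' : V} (hne : x ≠ x') {s u : ℝ} (hs : 0 < s) (hsu : s ≤ u) (hu2 : u ≤ 1 / 2) :
    sInf (CSet G x x' s)
      = (s / u) * sInf (CSet G x x' u) + (1 - s / u) * graphDist G x x' := by
  have hu : 0 < u := hs.trans_le hsu
  have hs1 : s ≤ 1 := by linarith
  have hu1 : u ≤ 1 := by linarith
  have hne_s : (CSet G x x' s).Nonempty := CSet_nonempty hconn hfin hne hs.le hs1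
  have hne_u : (CSet G x x' u).Nonempty := CSet_nonempty hconn hfin hne hu.le hu1
  have hsu_pos : 0 < s / u := div_pos hs hu
  set d : ℝ := graphDist G x x' with hd
  apply le_antisymm
  · -- sInf CSet s ≤ (s/u) * sInf CSet u + (1 - s/u) * d
    have key : ∀ c ∈ CSet G x x' u, sInf (CSet G x x' s) ≤ (s / u) * c + (1 - s / u) * d := by
      intro c hcc
      have hmem := transfer_mem (x := x) (x' := x') (u := s) hconn hu.ne' (by positivity) hcc
        (fun ξ hξ hsummable => by
          have h1 : 0 ≤ (s / u) * ξ x x' := mul_nonneg hsu_pos.le (hξ.1 x x')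
          have h2 : s / u ≤ 1 := (div_le_one hu).mpr hsu
          linarith)
      have h2 := csInf_le (CSet_bddBelow G x x' s) hmem
      have h3 : (s / u) * c - (s / u - 1) * d = (s / u) * c + (1 - s / u) * d := by ring
      linarith
    have h4 : (sInf (CSet G x x' s) - (1 - s / u) * d) / (s / u) ≤ sInf (CSet G x x' u) := by
      refine le_csInf hne_u (fun c hc => ?_)
      rw [div_le_iff₀ hsu_pos]
      have := key c hc
      linarith [key c hc]
    rw [div_le_iff₀ hsu_pos] at h4
    linarith
  · -- (s/u) * sInf CSet u + (1 - s/u) * d ≤ sInf CSet s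
    refine le_csInf hne_s (fun c hc => ?_)
    have hmem := transfer_mem (x := x) (x' := x') (u := u) hconn hs.ne' (by positivity) hc
      (fun ξ hξ hsummable => by
        have hxx' : 1 - 2 * s ≤ ξ x x' := coupling_xx'_ge hconn hfin hne hξ hsummable
        have h1 : (u / s) * (1 - 2 * s) ≤ (u / s) * ξ x x' :=
          mul_le_mul_of_nonneg_left hxx' (by positivity)
        have h2 : (u / s) * (1 - 2 * s) = u / s - 2 * u := by
          field_simp
        linarith)
    have h2 := csInf_le (CSet_bddBelow G x x' u) hmem
    have hinv : (s / u) * (u / s) = 1 := by field_simp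
    have h3 : (s / u) * ((u / s) * c - (u / s - 1) * d) = c - (1 - s / u) * d := by
      field_simp
    nlinarith [mul_le_mul_of_nonneg_left h2 hsu_pos.le]

end Aux4


/-- the Ollivier–Ricci curvature `ric(x,x') = lim_{t→0} κ^t(x,x')/t`
exists and equals `κ^{t₀}(x,x')/t₀` for any fixed `t₀ ∈ (0, 1/2]`. -/
theorem ric_exists_eq_kappa_div_t {V : Type*} (G : SimpleGraph V)
    (hconn : G.Connected) (hfin : ∀ v, (G.neighborSet v).Finite)
    (x x' : V) (hne : x ≠ x') (t₀ : ℝ) (ht₀ : 0 < t₀) (ht₀' : t₀ ≤ 1/2) :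
    Filter.Tendsto (fun t => kappa G t x x' / t) (nhdsWithin 0 (Set.Ioi 0))
      (nhds (kappa G t₀ x x' / t₀)) := by
  have hd : (0 : ℝ) < graphDist G x x' := by
    unfold graphDist
    exact_mod_cast hconn.pos_dist_of_ne hne
  have key : ∀ t ∈ Set.Ioo (0 : ℝ) t₀, kappa G t x x' / t = kappa G t₀ x x' / t₀ := by
    intro t ht
    have hW := sInf_CSet_eq hconn hfin hne ht.1 ht.2.le ht₀'
    unfold kappa
    rw [W1_eq_sInf_CSet, W1_eq_sInf_CSet, hW]
    have hdne : graphDist G x x' ≠ 0 := hd.ne'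
    have ht0 : t ≠ 0 := ht.1.ne'
    have ht₀0 : t₀ ≠ 0 := ht₀.ne'
    field_simp
    ring
  have hev : ∀ᶠ t in nhdsWithin (0 : ℝ) (Set.Ioi 0),
      kappa G t x x' / t = kappa G t₀ x x' / t₀ := by
    filter_upwards [Ioo_mem_nhdsGT_of_mem (Set.left_mem_Ico.mpr ht₀)] with t ht
    exact key t ht
  exact Tendsto.congr' (hev.mono fun t h => h.symm) tendsto_const_nhds
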